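/- For the function f : ℝ → ℝ, f(x) = −|x|, at x̄ = 0 and any u ≠ 0, one has f^♮(0;u) = limsup_{x→_u 0} f^r(x;u) = −|u|, which is strictly less than f^♮♮(0;u) = limsup_{x→0} f^r(x;u) = |u|. -/

import Mathlib

open Filter Set Topology

noncomputable def frR (f : ℝ → ℝ) (x u : ℝ) : EReal :=
  Filter.liminf (fun t : ℝ => (((f (x + t * u) - f x) / t : ℝ) : EReal))
    (nhdsWithin 0 (Set.Ioi 0))

lemma frR_pos (f : ℝ → ℝ) (hf : ∀ x : ℝ, f x = -|x|) (u x : ℝ) (hx : 0 < x) :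
    frR f x u = ((-u : ℝ) : EReal) := by
  have hev : ∀ᶠ t in nhdsWithin (0:ℝ) (Set.Ioi 0),
      (((f (x + t * u) - f x) / t : ℝ) : EReal) = ((-u : ℝ) : EReal) := by
    have h1 : ∀ᶠ t in nhds (0:ℝ), x + t * u > 0 := by
      have : Continuous (fun t : ℝ => x + t * u) := by continuity
      have := this.continuousAt (x := (0:ℝ))
      have h := this.eventually_mem (isOpen_Ioi.mem_nhds (by simpa using hx : (0:ℝ) < x + 0 * u))
      simpa using h
    filter_upwards [nhdsWithin_le_nhds h1, self_mem_nhdsWithin] with t ht ht0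
    have ht' : (t:ℝ) ≠ 0 := ne_of_gt ht0
    rw [hf, hf, abs_of_pos ht, abs_of_pos hx]
    norm_num
    rw [show (-(t*u)/t : ℝ) = -u from by field_simp]
    norm_cast
  rw [frR, Filter.liminf_congr hev, Filter.liminf_const]

lemma frR_neg (f : ℝ → ℝ) (hf : ∀ x : ℝ, f x = -|x|) (u x : ℝ) (hx : x < 0) :
    frR f x u = ((u : ℝ) : EReal) := by
  have hev : ∀ᶠ t in nhdsWithin (0:ℝ) (Set.Ioi 0),
      (((f (x + t * u) - f x) / t : ℝ) : EReal) = ((u : ℝ) : EReal) := by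
    have h1 : ∀ᶠ t in nhds (0:ℝ), x + t * u < 0 := by
      have : Continuous (fun t : ℝ => x + t * u) := by continuity
      have := this.continuousAt (x := (0:ℝ))
      have h := this.eventually_mem (isOpen_Iio.mem_nhds (by simpa using hx : x + 0 * u < (0:ℝ)))
      simpa using h
    filter_upwards [nhdsWithin_le_nhds h1, self_mem_nhdsWithin] with t ht ht0
    have ht' : (t:ℝ) ≠ 0 := ne_of_gt ht0
    rw [hf, hf, abs_of_neg ht, abs_of_neg hx]
    norm_num
    rw [show ((t*u)/t : ℝ) = u from by field_simp]
  rw [frR, Filter.liminf_congr hev, Filter.liminf_const]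

lemma frR_zero (f : ℝ → ℝ) (hf : ∀ x : ℝ, f x = -|x|) (u : ℝ) :
    frR f 0 u = ((-|u| : ℝ) : EReal) := by
  have hev : ∀ᶠ t in nhdsWithin (0:ℝ) (Set.Ioi 0),
      (((f (0 + t * u) - f 0) / t : ℝ) : EReal) = ((-|u| : ℝ) : EReal) := by
    filter_upwards [self_mem_nhdsWithin] with t ht0
    have ht' : (t:ℝ) ≠ 0 := ne_of_gt ht0
    rw [hf, hf]
    norm_num
    rw [abs_of_pos ht0, show (-(t*|u|)/t : ℝ) = -|u| from by rw [neg_div, mul_div_cancel_left₀ _ ht']]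
    norm_cast
  rw [frR, Filter.liminf_congr hev, Filter.liminf_const]

theorem stmt10 (f : ℝ → ℝ) (hf : ∀ x : ℝ, f x = -|x|) (u : ℝ) (hu : u ≠ 0) :
    Filter.limsup (fun p : ℝ × ℝ => frR f (p.1 * p.2) u)
        ((nhdsWithin 0 (Set.Ioi 0)) ×ˢ nhds u) = ((-|u| : ℝ) : EReal) ∧
    Filter.limsup (fun x : ℝ => frR f x u) (nhds 0) = ((|u| : ℝ) : EReal) ∧
    ((-|u| : ℝ) : EReal) < ((|u| : ℝ) : EReal) := by
  refine ⟨?_, ?_, ?_⟩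
  · -- product filter limsup
    have hev : ∀ᶠ p : ℝ × ℝ in (nhdsWithin 0 (Set.Ioi 0)) ×ˢ nhds u,
        frR f (p.1 * p.2) u = ((-|u| : ℝ) : EReal) := by
      rcases hu.lt_or_gt with hun | hup
      · have h2 : ∀ᶠ v in nhds u, v < 0 := eventually_lt_nhds hun
        filter_upwards [Filter.prod_mem_prod self_mem_nhdsWithin h2] with p hp
        have : p.1 * p.2 < 0 := mul_neg_of_pos_of_neg hp.1 hp.2
        rw [frR_neg f hf u _ this, abs_of_neg hun]; norm_num
      · have h2 : ∀ᶠ v in nhds u, 0 < v := eventually_gt_nhds hup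
        filter_upwards [Filter.prod_mem_prod self_mem_nhdsWithin h2] with p hp
        have : 0 < p.1 * p.2 := mul_pos hp.1 hp.2
        rw [frR_pos f hf u _ this, abs_of_pos hup]
    rw [Filter.limsup_congr hev, Filter.limsup_const]
  · -- nhds limsup
    apply le_antisymm
    · apply Filter.limsup_le_of_le (by isBoundedDefault)
      apply Filter.Eventually.of_forall
      intro x
      rcases lt_trichotomy x 0 with hx | hx | hx
      · rw [frR_neg f hf u x hx]; exact_mod_cast le_abs_self u
      · rw [hx, frR_zero f hf u]
        have := abs_nonneg u
        exact_mod_cast by linarith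
      · rw [frR_pos f hf u x hx]; exact_mod_cast neg_le_abs u
    · refine Filter.le_limsup_of_frequently_le ?_ (by isBoundedDefault)
      rcases hu.lt_or_gt with hun | hup
      · have h0 : ∀ᶠ x in nhdsWithin (0:ℝ) (Set.Ioi 0), 0 < x := self_mem_nhdsWithin
        have hfr : ∃ᶠ x in nhds (0:ℝ), 0 < x :=
          (h0.frequently).filter_mono nhdsWithin_le_nhds
        apply hfr.mono
        intro x hx
        exact le_of_eq (by rw [frR_pos f hf u x hx, abs_of_neg hun])
      · have h0 : ∀ᶠ x in nhdsWithin (0:ℝ) (Set.Iio 0), x < 0 := self_mem_nhdsWithin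
        have hfr : ∃ᶠ x in nhds (0:ℝ), x < 0 :=
          (h0.frequently).filter_mono nhdsWithin_le_nhds
        apply hfr.mono
        intro x hx
        exact le_of_eq (by rw [frR_neg f hf u x hx, abs_of_pos hup])
  · have h : (-|u| : ℝ) < |u| := by
      have := abs_pos.mpr hu; linarith
    exact_mod_cast h
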